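/- arXiv:2605.31127 — 4 statements merged into one kernel-verified Lean document; each statement's English description precedes it below -/
import Mathlib

section
/- Let Q be an n×n real symmetric matrix with αI ⪯ Q ⪯ βI for some 0 < α ≤ β, and let D be an n×n diagonal matrix with strictly positive diagonal entries d_i; set σ_i² := 1/d_i. Fix an index i, let q_i be the i-th row of Q with diagonal removed, c_i := q_iᵀ (Q_{−i}+D_{−i})^{−1} q_i, and r_i := Q_{ii} − c_i. Define the diagonal mismatch η_i := [(Q+D)^{−1}]_{ii} − σ_i². Then η_i = −r_i σ_i⁴ / (1 + r_i σ_i²), with 1 + r_i σ_i² > 0, and |η_i| ≤ (β + β²/α) σ_i⁴. -/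
open Matrix

private lemma quad_insertNth {n : ℕ} (A : Matrix (Fin (n + 1)) (Fin (n + 1)) ℝ)
    (i : Fin (n + 1)) (x : Fin n → ℝ) :
    (i.insertNth 0 x) ⬝ᵥ (A *ᵥ (i.insertNth 0 x)) =
      x ⬝ᵥ (A.submatrix i.succAbove i.succAbove *ᵥ x) := by
  set z : Fin (n + 1) → ℝ := i.insertNth 0 x with hz
  have hzi : z i = 0 := by simp only [hz, Fin.insertNth_apply_same]
  have hzs : ∀ j, z (i.succAbove j) = x j := fun j => by
    simp only [hz, Fin.insertNth_apply_succAbove]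
  simp only [dotProduct, mulVec, submatrix_apply]
  rw [Fin.sum_univ_succAbove (fun k => z k * ∑ l, A k l * z l) i, hzi, zero_mul, zero_add]
  refine Finset.sum_congr rfl fun m _ => ?_
  rw [hzs]
  congr 1
  rw [Fin.sum_univ_succAbove (fun l => A (i.succAbove m) l * z l) i, hzi, mul_zero, zero_add]
  exact Finset.sum_congr rfl fun j _ => by rw [hzs]

/-- **Diagonal mismatch identity and bound (Lemma E.1).**
Let `Q` be real symmetric with `αI ⪯ Q ⪯ βI` (`0 < α ≤ β`) and `D = diagonal d` with
`d i > 0`; set `σᵢ² = 1/dᵢ`. With `qᵢ` the `i`-th row of `Q` with diagonal removed,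
`cᵢ = qᵢᵀ (Q₋ᵢ + D₋ᵢ)⁻¹ qᵢ` and `rᵢ = Qᵢᵢ − cᵢ`, the diagonal mismatch
`ηᵢ = [(Q+D)⁻¹]ᵢᵢ − σᵢ²` satisfies `1 + rᵢ σᵢ² > 0`,
`ηᵢ = −rᵢ σᵢ⁴ / (1 + rᵢ σᵢ²)`, and `|ηᵢ| ≤ (β + β²/α) σᵢ⁴`. -/
theorem diagonal_mismatch {n : ℕ}
    (Q : Matrix (Fin (n + 1)) (Fin (n + 1)) ℝ) (hQ : Q.IsSymm)
    (α β : ℝ) (hα : 0 < α) (hαβ : α ≤ β)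
    (hlow : (Q - α • (1 : Matrix (Fin (n + 1)) (Fin (n + 1)) ℝ)).PosSemidef)
    (hhigh : (β • (1 : Matrix (Fin (n + 1)) (Fin (n + 1)) ℝ) - Q).PosSemidef)
    (d : Fin (n + 1) → ℝ) (hd : ∀ j, 0 < d j) (i : Fin (n + 1))
    (σsq c r η : ℝ)
    (hσsq : σsq = 1 / d i)
    (hc : c = (fun j => Q i (i.succAbove j)) ⬝ᵥ
        ((Q.submatrix i.succAbove i.succAbove +
            (Matrix.diagonal d).submatrix i.succAbove i.succAbove)⁻¹ *ᵥ
          fun j => Q i (i.succAbove j)))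
    (hr : r = Q i i - c)
    (hη : η = (Q + Matrix.diagonal d)⁻¹ i i - σsq) :
    0 < 1 + r * σsq ∧
    η = -(r * σsq ^ 2) / (1 + r * σsq) ∧
    |η| ≤ (β + β ^ 2 / α) * σsq ^ 2 := by
  classical
  set v : Fin n → ℝ := fun j => Q i (i.succAbove j) with hv
  set M : Matrix (Fin n) (Fin n) ℝ :=
    Q.submatrix i.succAbove i.succAbove +
      (Matrix.diagonal d).submatrix i.succAbove i.succAbove with hMdef
  -- Q is positive definite
  have hsmul : α • (1 : Matrix (Fin (n + 1)) (Fin (n + 1)) ℝ) =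
      Matrix.diagonal (fun _ => α) := by
    ext a b
    by_cases h : a = b <;>
      simp [Matrix.one_apply, Matrix.diagonal_apply, h]
  have hQpd : Q.PosDef := by
    have h1 : (α • (1 : Matrix (Fin (n + 1)) (Fin (n + 1)) ℝ)).PosDef := by
      rw [hsmul]; exact .diagonal fun _ => hα
    have := Matrix.PosDef.posSemidef_add hlow h1
    simpa using this
  -- A = Q + D is positive definite
  have hApd : (Q + Matrix.diagonal d).PosDef :=
    hQpd.add_posSemidef (.diagonal fun j => (hd j).le)
  -- B = Q + D with (D)ᵢᵢ zeroed out is positive definite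
  have hBpd : (Q + Matrix.diagonal (Function.update d i 0)).PosDef := by
    refine hQpd.add_posSemidef (.diagonal fun j => ?_)
    by_cases h : j = i
    · subst h; simp
    · rw [Function.update_of_ne h]; exact (hd j).le
  -- M is positive definite
  have hMeq : M = (Q + Matrix.diagonal d).submatrix i.succAbove i.succAbove := by
    rw [hMdef]; ext a b; simp [Matrix.submatrix_apply, Matrix.add_apply]
  have hMpd : M.PosDef := by
    refine posDef_iff_dotProduct_mulVec.mpr ⟨?_, ?_⟩
    · rw [hMeq]; exact hApd.isHermitian.submatrix _
    · intro x hx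
      have hz0 : ((Fin.insertNth (α := fun _ => ℝ) i 0 x)) ≠ 0 := by
        intro hz
        apply hx
        funext j
        have h5 := congrFun hz (i.succAbove j)
        rwa [Fin.insertNth_apply_succAbove] at h5
      have hpos := hApd.dotProduct_mulVec_pos hz0
      rw [star_trivial] at hpos
      rw [star_trivial, hMeq]
      exact lt_of_lt_of_eq hpos (quad_insertNth (Q + Matrix.diagonal d) i x)
  have hMdet : IsUnit M.det := (Matrix.isUnit_iff_isUnit_det M).1 hMpd.isUnit
  set w : Fin n → ℝ := M⁻¹ *ᵥ v with hw
  have hMw : M *ᵥ w = v := by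
    rw [hw, Matrix.mulVec_mulVec, Matrix.mul_nonsing_inv _ hMdet, Matrix.one_mulVec]
  have hcvw : c = v ⬝ᵥ w := hc
  set y : Fin (n + 1) → ℝ := i.insertNth 1 (fun j => -(w j)) with hy
  -- the key mulVec computation
  have hkey : ∀ e : Fin (n + 1) → ℝ, (∀ j, e (i.succAbove j) = d (i.succAbove j)) →
      (Q + Matrix.diagonal e) *ᵥ y = Pi.single i (e i + r) := by
    intro e he
    funext k
    refine Fin.succAboveCases i ?_ (fun m => ?_) k
    · rw [show ((Q + Matrix.diagonal e) *ᵥ y) i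
          = ∑ l, (Q + Matrix.diagonal e) i l * y l from rfl,
        Fin.sum_univ_succAbove (fun l => (Q + Matrix.diagonal e) i l * y l) i]
      simp only [Matrix.add_apply, Matrix.diagonal_apply_eq, hy,
        Fin.insertNth_apply_same, Fin.insertNth_apply_succAbove, mul_one,
        Matrix.diagonal_apply_ne' _ (Fin.succAbove_ne i _), add_zero, mul_neg,
        Pi.single_eq_same]
      have hsum : ∑ j, Q i (i.succAbove j) * w j = c := by
        rw [hcvw]; rfl
      rw [Finset.sum_neg_distrib, hsum, hr]
      ring
    · rw [show ((Q + Matrix.diagonal e) *ᵥ y) (i.succAbove m)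
          = ∑ l, (Q + Matrix.diagonal e) (i.succAbove m) l * y l from rfl,
        Fin.sum_univ_succAbove
          (fun l => (Q + Matrix.diagonal e) (i.succAbove m) l * y l) i]
      have hMapply : ∀ j, Q (i.succAbove m) (i.succAbove j) +
          Matrix.diagonal e (i.succAbove m) (i.succAbove j) = M m j := by
        intro j
        rw [hMdef]
        simp only [Matrix.add_apply, Matrix.submatrix_apply]
        congr 1
        by_cases h : m = j
        · subst h; simp [Matrix.diagonal_apply_eq, he]
        · rw [Matrix.diagonal_apply_ne, Matrix.diagonal_apply_ne]
          · exact fun hc' => h (Fin.succAbove_right_injective hc')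
          · exact fun hc' => h (Fin.succAbove_right_injective hc')
      have hMwm : ∑ j, M m j * w j = v m := by
        have := congrFun hMw m
        simpa [Matrix.mulVec, dotProduct] using this
      simp only [Matrix.add_apply, hy, Fin.insertNth_apply_same,
        Fin.insertNth_apply_succAbove, mul_one, mul_neg,
        Matrix.diagonal_apply_ne _ (Fin.succAbove_ne i _),
        Pi.single_eq_of_ne (Fin.succAbove_ne i m), add_zero]
      rw [Finset.sum_neg_distrib]
      have : ∑ j, (Q (i.succAbove m) (i.succAbove j) +
          Matrix.diagonal e (i.succAbove m) (i.succAbove j)) * w j = v m := by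
        rw [Finset.sum_congr rfl fun j _ => by rw [hMapply j]]
        exact hMwm
      rw [this, hQ.apply i (i.succAbove m)]
      ring
  have hy0 : y ≠ 0 := by
    intro h
    have := congrFun h i
    rw [hy, Fin.insertNth_apply_same] at this
    exact one_ne_zero this
  -- r > 0
  have hBy : (Q + Matrix.diagonal (Function.update d i 0)) *ᵥ y = Pi.single i r := by
    have := hkey (Function.update d i 0)
      (fun j => Function.update_of_ne (Fin.succAbove_ne i j) _ _)
    simpa using this
  have hrpos : 0 < r := by
    have h1 := hBpd.dotProduct_mulVec_pos hy0
    rw [star_trivial, hBy, dotProduct_single, hy, Fin.insertNth_apply_same, one_mul] at h1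
    exact h1
  have hdi := hd i
  have hs : 0 < d i + r := by linarith
  -- diagonal entry of the inverse
  have hAy : (Q + Matrix.diagonal d) *ᵥ y = Pi.single i (d i + r) :=
    hkey d fun _ => rfl
  have hAdet : IsUnit (Q + Matrix.diagonal d).det :=
    (Matrix.isUnit_iff_isUnit_det _).1 hApd.isUnit
  have hAinv : (Q + Matrix.diagonal d)⁻¹ i i = 1 / (d i + r) := by
    have h1 : (Q + Matrix.diagonal d) *ᵥ ((d i + r)⁻¹ • y) = Pi.single i 1 := by
      rw [Matrix.mulVec_smul, hAy]
      funext k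
      by_cases h : k = i
      · subst h; simp [inv_mul_cancel₀ hs.ne']
      · simp [Pi.single_eq_of_ne h]
    have h2 : (Q + Matrix.diagonal d)⁻¹ *ᵥ Pi.single i 1 = (d i + r)⁻¹ • y := by
      rw [← h1, Matrix.mulVec_mulVec, Matrix.nonsing_inv_mul _ hAdet, Matrix.one_mulVec]
    rw [Matrix.mulVec_single_one] at h2
    have h4 := congrFun h2 i
    simp only [mul_one, Pi.smul_apply, smul_eq_mul, Matrix.col_apply] at h4
    rw [h4, hy, Fin.insertNth_apply_same, mul_one, one_div]
  -- c ≥ 0 hence r ≤ β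
  have hc0 : 0 ≤ c := by
    have h1 := hMpd.posSemidef.dotProduct_mulVec_nonneg w
    rw [star_trivial] at h1
    rw [hcvw, ← hMw, dotProduct_comm]
    exact h1
  have hQiiβ : Q i i ≤ β := by
    have h1 := hhigh.dotProduct_mulVec_nonneg (Pi.single i 1)
    rw [star_trivial, Matrix.mulVec_single_one, single_dotProduct] at h1
    simp only [mul_one, one_mul, Matrix.col_apply, Matrix.sub_apply, Matrix.smul_apply,
      Matrix.one_apply_eq, smul_eq_mul] at h1
    linarith
  have hrβ : r ≤ β := by rw [hr]; linarith
  -- final arithmetic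
  have hσpos : 0 < σsq := by rw [hσsq]; positivity
  have h1rs : 0 < 1 + r * σsq := by
    have := mul_pos hrpos hσpos
    linarith
  refine ⟨h1rs, ?_, ?_⟩
  · rw [hη, hAinv, hσsq]
    have h2 : 1 + r * (1 / d i) = (d i + r) / d i := by field_simp
    rw [h2, div_div_eq_mul_div, div_sub_div _ _ hs.ne' hdi.ne',
      div_eq_div_iff (by positivity) hs.ne']
    field_simp
    ring
  · have hηval : η = -(r / (d i * (d i + r))) := by
      rw [hη, hAinv, hσsq, div_sub_div _ _ hs.ne' hdi.ne', neg_div',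
        div_eq_div_iff (by positivity) (by positivity)]
      ring
    rw [hηval, abs_neg, abs_of_nonneg (by positivity), hσsq]
    have hβα : 0 ≤ β ^ 2 / α := by positivity
    have h1 : r / (d i * (d i + r)) ≤ β / (d i * d i) := by
      apply div_le_div₀ (by linarith) hrβ (by positivity)
      nlinarith
    have h2 : β / (d i * d i) = β * (1 / d i) ^ 2 := by
      rw [div_pow, one_pow, sq, mul_one_div]
    calc r / (d i * (d i + r)) ≤ β / (d i * d i) := h1
      _ = β * (1 / d i) ^ 2 := h2
      _ ≤ (β + β ^ 2 / α) * (1 / d i) ^ 2 := by nlinarith [sq_nonneg (1 / d i)]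
end

section
/- Let W be an n×n real symmetric matrix with operator norm ‖W‖_op < 1, and let λ_1, …, λ_n be its eigenvalues. Then Σ_{i=1}^n (λ_i − log(1 + λ_i)) ≤ ‖W‖_F² / (2(1 − ‖W‖_op)), where ‖W‖_F is the Frobenius norm. -/
open Matrix

/-- The operator norm of a square real matrix, induced by the Euclidean norm. -/
noncomputable def opNorm {n : ℕ} (M : Matrix (Fin n) (Fin n) ℝ) : ℝ :=
  ‖Matrix.toEuclideanCLM (𝕜 := ℝ) M‖

/-- The Frobenius norm of a square real matrix. -/
noncomputable def frobNorm {n : ℕ} (M : Matrix (Fin n) (Fin n) ℝ) : ℝ :=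
  Real.sqrt (∑ i, ∑ j, (M i j) ^ 2)

lemma scalar_key (x : ℝ) (h : |x| < 1) :
    x - Real.log (1 + x) ≤ x ^ 2 / (2 * (1 - |x|)) := by
  have hx : |(-x)| < 1 := by rwa [abs_neg]
  have h1 : HasSum (fun n : ℕ => (-x) ^ (n + 1) / (n + 1)) (-Real.log (1 - -x)) :=
    Real.hasSum_pow_div_log_of_abs_lt_one hx
  rw [sub_neg_eq_add] at h1
  have h2 : HasSum (fun n : ℕ => (-x) ^ (n + 1 + 1) / (n + 1 + 1))
      (x - Real.log (1 + x)) := by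
    have := (hasSum_nat_add_iff' (f := fun n : ℕ => (-x) ^ (n + 1) / (n + 1)) 1).2 h1
    simpa [neg_add_eq_sub] using this
  have hg : HasSum (fun n : ℕ => |x| ^ n * (|x| ^ 2 / 2))
      ((1 - |x|)⁻¹ * (|x| ^ 2 / 2)) :=
    (hasSum_geometric_of_lt_one (abs_nonneg x) h).mul_right _
  have hle : ∀ n : ℕ, (-x) ^ (n + 1 + 1) / (n + 1 + 1) ≤ |x| ^ n * (|x| ^ 2 / 2) := by
    intro n
    have hden : (0:ℝ) < (n : ℝ) + 1 + 1 := by positivity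
    have hnum : (-x) ^ (n + 1 + 1) ≤ |x| ^ (n + 1 + 1) :=
      calc (-x) ^ (n + 1 + 1) ≤ |(-x) ^ (n + 1 + 1)| := le_abs_self _
        _ = |x| ^ (n + 1 + 1) := by rw [abs_pow, abs_neg]
    calc (-x) ^ (n + 1 + 1) / ((n : ℝ) + 1 + 1)
        ≤ |x| ^ (n + 1 + 1) / ((n : ℝ) + 1 + 1) := by gcongr
      _ ≤ |x| ^ (n + 1 + 1) / 2 :=
          div_le_div_of_nonneg_left (by positivity) two_pos (by linarith [Nat.cast_nonneg (α := ℝ) n])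
      _ = |x| ^ n * (|x| ^ 2 / 2) := by ring
  have := hasSum_le hle h2 hg
  refine this.trans_eq ?_
  have h1x : (1:ℝ) - |x| ≠ 0 := by linarith
  rw [sq_abs]
  field_simp

lemma eig_abs_le {n : ℕ} (W : Matrix (Fin n) (Fin n) ℝ) (hW : W.IsHermitian) (i : Fin n) :
    |hW.eigenvalues i| ≤ opNorm W := by
  set v := hW.eigenvectorBasis i with hv_def
  have hv : ‖v‖ = 1 := hW.eigenvectorBasis.orthonormal.1 i
  have happ : Matrix.toEuclideanCLM (𝕜 := ℝ) W v = hW.eigenvalues i • v := by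
    refine (WithLp.equiv 2 (Fin n → ℝ)).injective ?_
    rw [WithLp.equiv_apply, Matrix.ofLp_toEuclideanCLM]
    have := hW.mulVec_eigenvectorBasis i
    simpa using this
  calc |hW.eigenvalues i| = ‖hW.eigenvalues i • v‖ := by
        rw [norm_smul, hv, Real.norm_eq_abs, mul_one]
    _ = ‖Matrix.toEuclideanCLM (𝕜 := ℝ) W v‖ := by rw [happ]
    _ ≤ ‖Matrix.toEuclideanCLM (𝕜 := ℝ) W‖ * ‖v‖ := ContinuousLinearMap.le_opNorm _ _
    _ = opNorm W := by rw [hv, mul_one, opNorm]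

lemma sum_eig_sq {n : ℕ} (W : Matrix (Fin n) (Fin n) ℝ) (hW : W.IsHermitian) :
    ∑ i, hW.eigenvalues i ^ 2 = ∑ i, ∑ j, W i j ^ 2 := by
  have hsym : ∀ i j, W j i = W i j := by
    intro i j
    conv_rhs => rw [← hW]
    simp [Matrix.conjTranspose_apply]
  have h1 : Matrix.trace (W * W) = ∑ i, ∑ j, W i j ^ 2 := by
    simp only [Matrix.trace, Matrix.diag, Matrix.mul_apply, pow_two]
    exact Finset.sum_congr rfl fun i _ => Finset.sum_congr rfl fun j _ => by rw [hsym]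
  set U := (hW.eigenvectorUnitary : Matrix (Fin n) (Fin n) ℝ) with hU_def
  set D := Matrix.diagonal ((RCLike.ofReal ∘ hW.eigenvalues : Fin n → ℝ)) with hD_def
  have hU : star U * U = 1 := Unitary.coe_star_mul_self hW.eigenvectorUnitary
  have h2 : Matrix.trace (W * W) = ∑ i, hW.eigenvalues i ^ 2 := by
    conv_lhs => rw [hW.spectral_theorem, Unitary.conjStarAlgAut_apply]
    have e1 : U * D * star U * (U * D * star U) = U * (D * (D * star U)) := by
      simp only [mul_assoc]
      rw [← mul_assoc (star U) U (D * star U), hU, one_mul]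
    rw [e1, Matrix.trace_mul_comm]
    have e2 : D * (D * star U) * U = D * D := by
      simp only [mul_assoc]
      rw [hU, mul_one]
    rw [e2, hD_def, Matrix.diagonal_mul_diagonal, Matrix.trace_diagonal]
    simp [pow_two]
  rw [← h2, h1]

/-- **Spectral KL bound (Lemma E.2(c)).**
For a real symmetric matrix `W` with `‖W‖_op < 1` and eigenvalues `λᵢ`,
`Σᵢ (λᵢ − log(1 + λᵢ)) ≤ ‖W‖_F² / (2 (1 − ‖W‖_op))`. -/
theorem eigen_sum_le_frobenius_bound {n : ℕ}
    (W : Matrix (Fin n) (Fin n) ℝ) (hW : W.IsHermitian)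
    (hop : opNorm W < 1) :
    ∑ i, (hW.eigenvalues i - Real.log (1 + hW.eigenvalues i)) ≤
      frobNorm W ^ 2 / (2 * (1 - opNorm W)) := by
  have hopnn : (0:ℝ) ≤ opNorm W := norm_nonneg _
  have hpos : (0:ℝ) < 1 - opNorm W := by linarith
  have habs : ∀ i, |hW.eigenvalues i| ≤ opNorm W := eig_abs_le W hW
  calc ∑ i, (hW.eigenvalues i - Real.log (1 + hW.eigenvalues i))
      ≤ ∑ i, hW.eigenvalues i ^ 2 / (2 * (1 - |hW.eigenvalues i|)) :=
        Finset.sum_le_sum fun i _ => scalar_key _ ((habs i).trans_lt hop)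
    _ ≤ ∑ i, hW.eigenvalues i ^ 2 / (2 * (1 - opNorm W)) := by
        refine Finset.sum_le_sum fun i _ => ?_
        have h1 : (0:ℝ) < 2 * (1 - opNorm W) := by linarith
        have h2 : 2 * (1 - opNorm W) ≤ 2 * (1 - |hW.eigenvalues i|) := by
          have := habs i; linarith
        exact div_le_div_of_nonneg_left (by positivity) h1 h2
    _ = (∑ i, hW.eigenvalues i ^ 2) / (2 * (1 - opNorm W)) := by rw [Finset.sum_div]
    _ = frobNorm W ^ 2 / (2 * (1 - opNorm W)) := by
        rw [sum_eig_sq W hW, frobNorm, Real.sq_sqrt (by positivity)]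
end

section
/- Let A, Σ_η, Π be n×n real matrices with Σ_η symmetric positive definite, and let Σ̃_0, …, Σ̃_K and Σ_1^+, …, Σ_K^+ and Δ_1, …, Δ_K be n×n real symmetric matrices such that Σ̃_t is positive semidefinite for all t, Σ_t^+ = A Σ̃_{t−1} Aᵀ + Σ_η − Δ_t for t = 1, …, K, and tr(Σ̃_t) = tr(Σ_t^+) + τ_t for real numbers τ_1, …, τ_K. Then Σ_{t=1}^K tr(Δ_t) = tr(Σ̃_0) − tr(Σ̃_K) + Σ_{t=1}^K τ_t + K tr(Σ_η) + Σ_{t=1}^K tr((AᵀA − I) Σ̃_{t−1}); consequently Σ_{t=1}^K tr(Δ_t) ≤ tr(Σ̃_0) + K max_{1≤t≤K} |τ_t| + K tr(Σ_η) + Σ_{t=1}^K tr((AᵀA − I) Σ̃_{t−1}). -/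
open Matrix

/-- **Total covariance removal (Lemma E.3).**
With `Σ̃ₜ` (here `St t`) positive semidefinite, `Σₜ⁺ = A Σ̃ₜ₋₁ Aᵀ + Σ_η − Δₜ` (here
`Sp t = A * St (t-1) * Aᵀ + Snoise - Δ t`) for `t = 1, …, K`, and
`tr(Σ̃ₜ) = tr(Σₜ⁺) + τₜ`, the sum of the removed traces telescopes:
`Σₜ tr(Δₜ) = tr(Σ̃₀) − tr(Σ̃_K) + Σₜ τₜ + K tr(Σ_η) + Σₜ tr((AᵀA − I) Σ̃ₜ₋₁)`,
and consequently it is bounded by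
`tr(Σ̃₀) + K maxₜ |τₜ| + K tr(Σ_η) + Σₜ tr((AᵀA − I) Σ̃ₜ₋₁)`. -/
theorem total_covariance_removal {n K : ℕ} (hK : 1 ≤ K)
    (A Snoise : Matrix (Fin n) (Fin n) ℝ) (hSnoise : Snoise.PosDef)
    (St Sp Δ : ℕ → Matrix (Fin n) (Fin n) ℝ) (τ : ℕ → ℝ)
    (hSt : ∀ t, t ≤ K → (St t).PosSemidef)
    (hSp : ∀ t, 1 ≤ t → t ≤ K → (Sp t).IsSymm)
    (hΔ : ∀ t, 1 ≤ t → t ≤ K → (Δ t).IsSymm)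
    (hrec : ∀ t, 1 ≤ t → t ≤ K → Sp t = A * St (t - 1) * Aᵀ + Snoise - Δ t)
    (htr : ∀ t, 1 ≤ t → t ≤ K → (St t).trace = (Sp t).trace + τ t) :
    (∑ t ∈ Finset.Icc 1 K, (Δ t).trace =
      (St 0).trace - (St K).trace + ∑ t ∈ Finset.Icc 1 K, τ t + (K : ℝ) * Snoise.trace +
        ∑ t ∈ Finset.Icc 1 K, ((Aᵀ * A - 1) * St (t - 1)).trace) ∧
    (∑ t ∈ Finset.Icc 1 K, (Δ t).trace ≤
      (St 0).trace +
        (K : ℝ) * ((Finset.Icc 1 K).sup' (Finset.nonempty_Icc.mpr hK) fun t => |τ t|) +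
        (K : ℝ) * Snoise.trace +
        ∑ t ∈ Finset.Icc 1 K, ((Aᵀ * A - 1) * St (t - 1)).trace) := by
  have key : ∀ t ∈ Finset.Icc 1 K, (Δ t).trace =
      (St (t-1)).trace - (St t).trace + τ t + Snoise.trace
        + ((Aᵀ * A - 1) * St (t-1)).trace := by
    intro t ht
    obtain ⟨h1, h2⟩ := Finset.mem_Icc.mp ht
    have hr := hrec t h1 h2
    have hτ := htr t h1 h2
    have hsp : (Sp t).trace = (A * St (t-1) * Aᵀ).trace + Snoise.trace - (Δ t).trace := by
      rw [hr, Matrix.trace_sub, Matrix.trace_add]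
    have htr2 : (A * St (t-1) * Aᵀ).trace
        = (St (t-1)).trace + ((Aᵀ * A - 1) * St (t-1)).trace := by
      rw [Matrix.trace_mul_cycle, sub_mul, Matrix.trace_sub, Matrix.mul_assoc, one_mul]
      ring
    rw [htr2] at hsp
    linarith
  have tel : ∑ t ∈ Finset.Icc 1 K, ((St (t-1)).trace - (St t).trace)
      = (St 0).trace - (St K).trace := by
    have himg : Finset.Icc 1 K = (Finset.range K).map ⟨Nat.succ, Nat.succ_injective⟩ := by
      ext x
      simp only [Finset.mem_Icc, Finset.mem_map, Finset.mem_range,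
        Function.Embedding.coeFn_mk]
      constructor
      · rintro ⟨h1, h2⟩; exact ⟨x - 1, by omega, by omega⟩
      · rintro ⟨a, ha, rfl⟩; omega
    rw [himg, Finset.sum_map]
    have := Finset.sum_range_sub' (fun i => (St i).trace) K
    simpa using this
  have card : (Finset.Icc 1 K).card = K := by simp [Nat.card_Icc]
  have main : ∑ t ∈ Finset.Icc 1 K, (Δ t).trace =
      (St 0).trace - (St K).trace + ∑ t ∈ Finset.Icc 1 K, τ t + (K : ℝ) * Snoise.trace +
        ∑ t ∈ Finset.Icc 1 K, ((Aᵀ * A - 1) * St (t - 1)).trace := by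
    rw [Finset.sum_congr rfl key]
    rw [Finset.sum_add_distrib, Finset.sum_add_distrib, Finset.sum_add_distrib, tel,
      Finset.sum_const, card, nsmul_eq_mul]
  refine ⟨main, ?_⟩
  rw [main]
  have hStK : 0 ≤ (St K).trace := by
    have h := hSt K le_rfl
    refine Finset.sum_nonneg fun i _ => ?_
    exact h.diag_nonneg
  have hτsum : ∑ t ∈ Finset.Icc 1 K, τ t ≤
      (K : ℝ) * ((Finset.Icc 1 K).sup' (Finset.nonempty_Icc.mpr hK) fun t => |τ t|) := by
    calc ∑ t ∈ Finset.Icc 1 K, τ t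
        ≤ ∑ t ∈ Finset.Icc 1 K,
            ((Finset.Icc 1 K).sup' (Finset.nonempty_Icc.mpr hK) fun t => |τ t|) := by
          apply Finset.sum_le_sum
          intro t ht
          exact le_trans (le_abs_self _) (Finset.le_sup' (fun t => |τ t|) ht)
      _ = (K : ℝ) * _ := by rw [Finset.sum_const, card, nsmul_eq_mul]
  linarith
end

section
/- Let L be an N×N real lower triangular matrix with nonzero diagonal entries, put Q := L Lᵀ, and let μ, x ∈ ℝ^N. Fix an index i and suppose [Q(x − μ)]_k = 0 for all k ≤ i. Then x_i = μ_i − Σ_{j>i} (L_{ji} / L_{ii}) (x_j − μ_j). -/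
open Matrix

/-- **Conditional-regression identity for a precision Cholesky factor (eq. 13).**
Let `L` be lower triangular with nonzero diagonal, `Q = L Lᵀ`, and suppose
`[Q(x − μ)]ₖ = 0` for all `k ≤ i`. Then
`xᵢ = μᵢ − Σ_{j>i} (Lⱼᵢ/Lᵢᵢ)(xⱼ − μⱼ)`. -/
theorem conditional_regression_identity {N : ℕ}
    (L : Matrix (Fin N) (Fin N) ℝ)
    (hlow : ∀ i j : Fin N, i < j → L i j = 0)
    (hdiag : ∀ i : Fin N, L i i ≠ 0)
    (μ x : Fin N → ℝ) (i : Fin N)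
    (h : ∀ k : Fin N, k ≤ i → ((L * Lᵀ) *ᵥ (x - μ)) k = 0) :
    x i = μ i - ∑ j ∈ Finset.univ.filter (fun j : Fin N => i < j),
      (L j i / L i i) * (x j - μ j) := by
  set y : Fin N → ℝ := Lᵀ *ᵥ (x - μ) with hy
  have hLy : ∀ k : Fin N, k ≤ i → (L *ᵥ y) k = 0 := by
    intro k hk
    have := h k hk
    rwa [← Matrix.mulVec_mulVec] at this
  -- y k = 0 for all k ≤ i, by strong induction
  have hy0 : ∀ n : ℕ, ∀ k : Fin N, k.val = n → k ≤ i → y k = 0 := by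
    intro n
    induction n using Nat.strong_induction_on with
    | _ n ih =>
      intro k hkn hk
      have ih' : ∀ j : Fin N, j < k → j ≤ i → y j = 0 := fun j hj hji =>
        ih j.val (hkn ▸ hj) j rfl hji
      have hmv : (L *ᵥ y) k = ∑ j, L k j * y j := by
        simp [Matrix.mulVec, dotProduct]
      have hsum : ∑ j, L k j * y j = L k k * y k := by
        rw [Finset.sum_eq_single k]
        · intro j _ hj
          rcases lt_or_gt_of_ne hj with hlt | hgt
          · rw [ih' j hlt (le_trans (le_of_lt hlt) hk), mul_zero]
          · rw [hlow k j hgt, zero_mul]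
        · intro hk'; exact absurd (Finset.mem_univ k) hk'
      have := hLy k hk
      rw [hmv, hsum] at this
      exact (mul_eq_zero.mp this).resolve_left (hdiag k)
  have hyi : y i = 0 := hy0 i.val i rfl le_rfl
  have hyi' : ∑ j, L j i * (x j - μ j) = 0 := by
    have : y i = ∑ j, L j i * (x j - μ j) := by
      simp [hy, Matrix.mulVec, dotProduct, Matrix.transpose_apply]
    rw [← this, hyi]
  -- split sum
  have hsplit : ∑ j, L j i * (x j - μ j)
      = L i i * (x i - μ i) + ∑ j ∈ Finset.univ.filter (fun j : Fin N => i < j),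
        L j i * (x j - μ j) := by
    rw [← Finset.sum_filter_add_sum_filter_not Finset.univ (fun j : Fin N => i < j)]
    rw [add_comm]
    congr 1
    rw [Finset.sum_eq_single i]
    · intro j hj hji
      have : j < i := lt_of_le_of_ne (not_lt.mp (by simpa using hj)) hji
      rw [hlow j i this, zero_mul]
    · intro hi'; exact absurd (by simp) hi'
  rw [hsplit] at hyi'
  have hS : ∑ j ∈ Finset.univ.filter (fun j : Fin N => i < j),
      (L j i / L i i) * (x j - μ j)
      = (∑ j ∈ Finset.univ.filter (fun j : Fin N => i < j),
        L j i * (x j - μ j)) / L i i := by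
    rw [Finset.sum_div]
    exact Finset.sum_congr rfl (fun j _ => by ring)
  rw [hS]
  have hd := hdiag i
  field_simp
  linarith
end
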